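/- Let H be symmetric PSD with 0 < γ λ_max(H) ≤ 1, and let C_t be defined by C_0 = 0 and C_t = (I − γH) C_{t−1} (I − γH) + γ² σ² H. Then for all t ≥ 0, C_t ⪯ γσ² (I − (I − γH)^t). -/

import Mathlib

open Matrix Finset

lemma psd_smul_aux {d : ℕ} {M : Matrix (Fin d) (Fin d) ℝ} (hM : M.PosSemidef)
    {c : ℝ} (hc : 0 ≤ c) : (c • M).PosSemidef := by
  constructor
  · unfold Matrix.IsHermitian
    rw [conjTranspose_smul, hM.1.eq]
    simp
  · intro x
    have := hM.2 x
    have e : (x.sum fun i xi => x.sum fun j xj => star xi * (c • M) i j * xj)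
        = c * (x.sum fun i xi => x.sum fun j xj => star xi * M i j * xj) := by
      simp only [Finsupp.sum, Finset.mul_sum, Matrix.smul_apply, smul_eq_mul]
      exact Finset.sum_congr rfl fun i _ => Finset.sum_congr rfl fun j _ => by ring
    rw [e]
    exact mul_nonneg hc this

lemma psd_sum_aux {d : ℕ} {ι : Type*} (s : Finset ι) (f : ι → Matrix (Fin d) (Fin d) ℝ)
    (h : ∀ i ∈ s, (f i).PosSemidef) : (∑ i ∈ s, f i).PosSemidef := by
  classical
  induction s using Finset.induction with
  | empty => simpa using Matrix.PosSemidef.zero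
  | insert a s hx ih =>
    rw [Finset.sum_insert hx]
    exact (h _ (Finset.mem_insert_self _ _)).add (ih fun i hi => h i (Finset.mem_insert_of_mem hi))

theorem variance_recursion_upper {d : ℕ} (H : Matrix (Fin d) (Fin d) ℝ) (γ σ2 : ℝ)
    (C : ℕ → Matrix (Fin d) (Fin d) ℝ)
    (hH : H.PosSemidef) (hγ : 0 < γ) (hσ : 0 ≤ σ2)
    (hle : ((1 : Matrix (Fin d) (Fin d) ℝ) - γ • H).PosSemidef)
    (h0 : C 0 = 0)
    (hrec : ∀ t, C (t + 1) = (1 - γ • H) * C t * (1 - γ • H) + (γ ^ 2 * σ2) • H) :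
    ∀ t, ((γ * σ2) • ((1 : Matrix (Fin d) (Fin d) ℝ) - (1 - γ • H) ^ t)
      - C t).PosSemidef := by
  set A : Matrix (Fin d) (Fin d) ℝ := γ • H with hA
  set B : Matrix (Fin d) (Fin d) ℝ := 1 - γ • H with hBdef
  have hAB : B = 1 - A := rfl
  have hApsd : A.PosSemidef := psd_smul_aux hH hγ.le
  have hBherm : Bᴴ = B := hle.1
  have hAherm : Aᴴ = A := hApsd.1
  have hc : Commute A B := by
    show A * B = B * A
    rw [hAB]; noncomm_ring
  -- key identity
  have key : ∀ t, (1 : Matrix (Fin d) (Fin d) ℝ) - B ^ (t+1) - A - B * (1 - B ^ t) * B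
      = ∑ k ∈ range t, A * B ^ (k+1) * A := by
    intro t
    have hgs : (1 : Matrix (Fin d) (Fin d) ℝ) - B ^ t = (∑ k ∈ range t, B ^ k) * A := by
      have h1 : (∑ k ∈ range t, B ^ k) * (B - 1) = B ^ t - 1 := geom_sum_mul B t
      have h2 : (∑ k ∈ range t, B ^ k) * (1 - B) = 1 - B ^ t := by
        calc (∑ k ∈ range t, B ^ k) * (1 - B)
            = -((∑ k ∈ range t, B ^ k) * (B - 1)) := by
              rw [mul_sub (∑ k ∈ range t, B ^ k) B 1,
                mul_sub (∑ k ∈ range t, B ^ k) 1 B]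
              abel
          _ = 1 - B ^ t := by rw [h1]; abel
      rw [← h2]
      congr 1
      rw [hAB]; abel
    have p1 : B ^ (t+1) = B * B ^ t := (pow_succ' B t)
    have p2 : B ^ (t+2) = B * B ^ t * B := by
      rw [pow_succ, pow_succ']
    calc (1 : Matrix (Fin d) (Fin d) ℝ) - B ^ (t+1) - A - B * (1 - B ^ t) * B
        = (1 - B * B - A) + (B ^ (t+2) - B ^ (t+1)) := by
          rw [p1, p2]
          generalize B ^ t = X
          noncomm_ring
      _ = A * B - B ^ (t+1) * A := by
          have e1 : (1 : Matrix (Fin d) (Fin d) ℝ) - B * B - A = A * B := by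
            rw [hAB]; noncomm_ring
          have e2 : B ^ (t+2) - B ^ (t+1) = -(B ^ (t+1) * A) := by
            rw [pow_succ, hAB]
            generalize (1 - A : Matrix (Fin d) (Fin d) ℝ) ^ (t+1) = Y
            noncomm_ring
          rw [e1, e2]; abel
      _ = A * (B - B ^ (t+1)) := by
          rw [mul_sub A B (B ^ (t+1)), (hc.pow_right (t+1)).eq]
      _ = A * (B * (1 - B ^ t)) := by
          rw [show B * (1 - B ^ t) = B - B ^ (t+1) by rw [mul_sub, mul_one, ← pow_succ']]
      _ = ∑ k ∈ range t, A * B ^ (k+1) * A := by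
          rw [hgs]
          simp only [Finset.mul_sum, Finset.sum_mul]
          refine Finset.sum_congr rfl fun k _ => ?_
          rw [pow_succ']
          noncomm_ring
  intro t
  induction t with
  | zero => simpa [h0] using Matrix.PosSemidef.zero
  | succ t ih =>
    have hγH : (γ ^ 2 * σ2) • H = (γ * σ2) • A := by
      rw [hA, smul_smul]; ring_nf
    have e3 : B * ((γ * σ2) • ((1 : Matrix (Fin d) (Fin d) ℝ) - B ^ t) - C t) * B
        = (γ * σ2) • (B * (1 - B ^ t) * B) - B * C t * B := by
      rw [mul_sub B ((γ * σ2) • ((1 : Matrix (Fin d) (Fin d) ℝ) - B ^ t)) (C t),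
        sub_mul (B * ((γ * σ2) • ((1 : Matrix (Fin d) (Fin d) ℝ) - B ^ t))) (B * C t) B,
        Matrix.mul_smul, Matrix.smul_mul]
    have step : (γ * σ2) • ((1 : Matrix (Fin d) (Fin d) ℝ) - B ^ (t+1)) - C (t+1)
        = B * ((γ * σ2) • ((1 : Matrix (Fin d) (Fin d) ℝ) - B ^ t) - C t) * B
          + (γ * σ2) • (∑ k ∈ range t, A * B ^ (k+1) * A) := by
      rw [hrec t, ← key t, hγH, e3, smul_sub, smul_sub, smul_sub, smul_sub]
      abel
    rw [step]
    have h1 : (B * ((γ * σ2) • ((1 : Matrix (Fin d) (Fin d) ℝ) - B ^ t) - C t) * B).PosSemidef := by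
      have := ih.mul_mul_conjTranspose_same B
      rwa [hBherm] at this
    refine h1.add (psd_smul_aux ?_ (by positivity))
    refine psd_sum_aux _ _ fun k _ => ?_
    have := (hle.pow (k+1)).mul_mul_conjTranspose_same A
    rwa [hAherm] at this
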